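/- More precisely: for x in the cylinder [ab], one has (σ∘H)^{2k}(x) = a·H^{2k}(b…) agreeing with a·ρ_b on at least 1 + 2^{2k} digits, i.e. (σ∘H)ⁿ(x) agrees with the appropriate one-digit extension of ρ_b on at least 2ⁿ digits after the first coordinate. -/
import Mathlib


open Filter Topology MeasureTheory

/-- The left shift on the full 2-shift `Σ = {0,1}^ℕ`. -/
def shift (x : ℕ → Bool) : ℕ → Bool := fun n => x (n + 1)

/-- The Thue–Morse substitution `H : 0 → 01, 1 → 10`, acting on sequences. -/
def subH (x : ℕ → Bool) : ℕ → Bool :=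
  fun n => if n % 2 = 0 then x (n / 2) else !x (n / 2)

/-- The Thue–Morse sequence: `tm n` is the parity of the number of 1s in
the binary expansion of `n`. -/
def tm (n : ℕ) : Bool := (Nat.digits 2 n).count 1 % 2 == 1

/-- The fixed point of `subH` starting with 0. -/
def rho0 : ℕ → Bool := tm

/-- The fixed point of `subH` starting with 1. -/
def rho1 : ℕ → Bool := fun n => !tm n

/-- `rhoB b` is the fixed point of `subH` starting with digit `b`. -/
def rhoB : Bool → ℕ → Bool
  | false => rho0
  | true => rho1

/-- The digit-flipping involution. -/
def flipSeq (x : ℕ → Bool) : ℕ → Bool := fun n => !x n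

/-- Prepend a digit to a sequence. -/
def consTM (a : Bool) (x : ℕ → Bool) : ℕ → Bool
  | 0 => a
  | n + 1 => x n

/-- The Thue–Morse subshift: the closure of the shift orbit of `rho0`. -/
def TMK : Set (ℕ → Bool) := closure {y | ∃ n, y = shift^[n] rho0}

/-- The renormalization operator `𝓡V = V ∘ σ ∘ H + V ∘ H`. -/
def RenOp (V : (ℕ → Bool) → ℝ) : (ℕ → Bool) → ℝ :=
  fun x => V (shift (subH x)) + V (subH x)

/-- The Birkhoff sum `S_k V = ∑_{i<k} V ∘ σⁱ`. -/
def birkhoff (V : (ℕ → Bool) → ℝ) (k : ℕ) (x : ℕ → Bool) : ℝ :=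
  ∑ i ∈ Finset.range k, V (shift^[i] x)

/-- The potential `U_c`: value `c` on `[01]`, `-c` on `[10]`, `0` on `[00] ∪ [11]`. -/
def Upot (c : ℝ) (x : ℕ → Bool) : ℝ :=
  if x 0 = false ∧ x 1 = true then c
  else if x 0 = true ∧ x 1 = false then -c else 0

/-- The sliding block code `π(x)_k = 1` iff `x_k ≠ x_{k+1}`. -/
def piTM (x : ℕ → Bool) : ℕ → Bool := fun n => x n != x (n + 1)

/-- The Feigenbaum substitution `0 → 11, 1 → 10`, acting on sequences. -/
def subHfeig (x : ℕ → Bool) : ℕ → Bool :=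
  fun n => if n % 2 = 0 then true else !x (n / 2)

lemma tm_zero' : tm 0 = false := by simp [tm]

lemma tm_two_mul (n : ℕ) : tm (2 * n) = tm n := by
  rcases Nat.eq_zero_or_pos n with rfl | hn
  · rfl
  · unfold tm
    rw [Nat.digits_def' (by norm_num : 1 < 2) (by omega)]
    simp [Nat.mul_div_cancel_left _ (by norm_num : 0 < 2), Nat.mul_mod_right,
      List.count_cons]

lemma tm_two_mul_add_one (n : ℕ) : tm (2 * n + 1) = !tm n := by
  unfold tm
  rw [Nat.digits_def' (by norm_num : 1 < 2) (by omega)]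
  have h1 : (2 * n + 1) % 2 = 1 := by omega
  have h2 : (2 * n + 1) / 2 = n := by omega
  rw [h1, h2, List.count_cons]
  rcases Nat.mod_two_eq_zero_or_one ((Nat.digits 2 n).count 1) with h | h <;>
    simp [h, Nat.add_mod] <;> omega

lemma rhoB_two_mul (b : Bool) (k : ℕ) : rhoB b (2 * k) = rhoB b k := by
  cases b <;> simp [rhoB, rho0, rho1, tm_two_mul]

lemma rhoB_two_mul_add_one (b : Bool) (k : ℕ) : rhoB b (2 * k + 1) = !rhoB b k := by
  cases b <;> simp [rhoB, rho0, rho1, tm_two_mul_add_one]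

/-- for `x ∈ [ab]`, the sequence `(σ∘H)ⁿ(x)` starts with digit `a`
(`n` even) or `ā` (`n` odd), and agrees with `ρ_b` on at least `2ⁿ` digits
after the first coordinate. -/
theorem stmt8 (x : ℕ → Bool) (a b : Bool) (ha : x 0 = a) (hb : x 1 = b) (n : ℕ) :
    ((shift ∘ subH)^[n] x) 0 = (if n % 2 = 0 then a else !a) ∧
    ∀ i, 1 ≤ i → i ≤ 2 ^ n → ((shift ∘ subH)^[n] x) i = rhoB b (i - 1) := by
  have key : ((shift ∘ subH)^[n] x) 0 = (if n % 2 = 0 then a else !a) ∧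
      ∀ i, i < 2 ^ n → ((shift ∘ subH)^[n] x) (i + 1) = rhoB b i := by
    induction n with
    | zero =>
      refine ⟨by simpa using ha, ?_⟩
      intro i hi
      interval_cases i
      cases b <;> simp [rhoB, rho0, rho1, tm_zero', hb]
    | succ n ih =>
      obtain ⟨ih0, ih1⟩ := ih
      rw [Function.iterate_succ_apply']
      constructor
      · show subH ((shift ∘ subH)^[n] x) 1 = _
        rw [show subH ((shift ∘ subH)^[n] x) 1 = !((shift ∘ subH)^[n] x) 0 by
          simp [subH], ih0]
        rcases Nat.mod_two_eq_zero_or_one n with h | h <;>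
          simp [h, Nat.add_mod, Nat.succ_mod_two_eq_zero_iff, Nat.succ_mod_two_eq_one_iff] <;>
          omega
      · intro i hi
        show subH ((shift ∘ subH)^[n] x) (i + 2) = rhoB b i
        rcases Nat.even_or_odd i with ⟨k, hk⟩ | ⟨k, hk⟩
        · have hk' : i = 2 * k := by omega
          subst hk'
          have h2 : (2 * k + 2) % 2 = 0 := by omega
          have h3 : (2 * k + 2) / 2 = k + 1 := by omega
          rw [subH]
          simp only [h2, h3, if_true, eq_self_iff_true]
          rw [ih1 k (by have := Nat.pow_succ 2 n ▸ hi; omega), rhoB_two_mul]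
        · have hk' : i = 2 * k + 1 := by omega
          subst hk'
          have h2 : (2 * k + 1 + 2) % 2 = 1 := by omega
          have h3 : (2 * k + 1 + 2) / 2 = k + 1 := by omega
          rw [subH]
          simp only [h2, h3]
          rw [if_neg (by omega), ih1 k (by have := Nat.pow_succ 2 n ▸ hi; omega),
            rhoB_two_mul_add_one]
  refine ⟨key.1, fun i h1 h2 => ?_⟩
  obtain ⟨j, rfl⟩ : ∃ j, i = j + 1 := ⟨i - 1, by omega⟩
  simpa using key.2 j (by omega)
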